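/- If f is convex with L-Lipschitz gradient and w* minimizes f, and the stochastic gradients satisfy the strong growth condition E_z‖∇f(w,z)‖² ≤ ρ‖∇f(w)‖², then f satisfies the weak growth condition E_z‖∇f(w,z)‖² ≤ 2ρL[f(w) − f(w*)]. -/

import Mathlib

open scoped RealInnerProductSpace
open Finset

variable {d : ℕ}
local notation "E" => EuclideanSpace ℝ (Fin d)

lemma line_deriv (f : E → ℝ) (f' : E → E) (hgrad : ∀ w, HasGradientAt f (f' w) w)
    (x v : E) (t : ℝ) :
    HasDerivAt (fun t : ℝ => f (x + t • v)) ⟪f' (x + t • v), v⟫ t := by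
  have hline : HasDerivAt (fun t : ℝ => x + t • v) v t := by
    simpa using ((hasDerivAt_id t).smul_const v).const_add x
  have hf : HasFDerivAt f (InnerProductSpace.toDual ℝ _ (f' (x + t • v))) (x + t • v) :=
    (hasGradientAt_iff_hasFDerivAt).mp (hgrad _)
  have h := hf.comp_hasDerivAt t hline
  simp only [InnerProductSpace.toDual_apply_apply] at h
  exact h

lemma descent (f : E → ℝ) (f' : E → E) (hgrad : ∀ w, HasGradientAt f (f' w) w)
    {L' : ℝ} (hL : 0 ≤ L') (hlip : LipschitzWith (Real.toNNReal L') f')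
    (x v : E) :
    f (x + v) ≤ f x + ⟪f' x, v⟫ + L' / 2 * ‖v‖ ^ 2 := by
  set φ : ℝ → ℝ := fun t =>
    f x + t * ⟪f' x, v⟫ + L' / 2 * t ^ 2 * ‖v‖ ^ 2 - f (x + t • v) with hφ_def
  have hφ : ∀ t : ℝ, HasDerivAt φ
      (⟪f' x, v⟫ + L' * t * ‖v‖ ^ 2 - ⟪f' (x + t • v), v⟫) t := by
    intro t
    have h1 : HasDerivAt (fun t : ℝ => f x + t * ⟪f' x, v⟫ + L' / 2 * t ^ 2 * ‖v‖ ^ 2)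
        (⟪f' x, v⟫ + L' * t * ‖v‖ ^ 2) t := by
      have ha : HasDerivAt (fun t : ℝ => t * ⟪f' x, v⟫) ⟪f' x, v⟫ t := by
        simpa using (hasDerivAt_id t).mul_const ⟪f' x, v⟫
      have hb : HasDerivAt (fun t : ℝ => L' / 2 * t ^ 2 * ‖v‖ ^ 2) (L' * t * ‖v‖ ^ 2) t := by
        have : HasDerivAt (fun t : ℝ => t ^ 2) (2 * t) t := by
          simpa using hasDerivAt_pow 2 t
        have := (this.const_mul (L' / 2)).mul_const (‖v‖ ^ 2)
        exact this.congr_deriv (by ring)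
      exact (ha.const_add (f x)).add hb
    exact h1.sub (line_deriv f f' hgrad x v t)
  have key : φ 0 ≤ φ 1 := by
    have hmono : MonotoneOn φ (Set.Icc (0:ℝ) 1) := by
      apply monotoneOn_of_deriv_nonneg (convex_Icc 0 1)
      · exact fun t _ => (hφ t).continuousAt.continuousWithinAt
      · exact fun t _ => ((hφ t).differentiableAt).differentiableWithinAt
      · intro t ht
        rw [interior_Icc] at ht
        rw [(hφ t).deriv]
        have hlb : ⟪f' (x + t • v) - f' x, v⟫ ≤ L' * t * ‖v‖ ^ 2 := by
          calc ⟪f' (x + t • v) - f' x, v⟫ ≤ ‖f' (x + t • v) - f' x‖ * ‖v‖ :=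
                real_inner_le_norm _ _
            _ ≤ (L' * (|t| * ‖v‖)) * ‖v‖ := by
                apply mul_le_mul_of_nonneg_right _ (norm_nonneg v)
                have := hlip.dist_le_mul (x + t • v) x
                simpa [dist_eq_norm, norm_smul, Real.coe_toNNReal _ hL, abs_of_nonneg,
                  mul_comm] using this
            _ = L' * |t| * ‖v‖ ^ 2 := by ring
            _ ≤ L' * t * ‖v‖ ^ 2 := by
                have : |t| = t := abs_of_pos ht.1
                rw [this]
        have := inner_sub_left (𝕜 := ℝ) (f' (x + t • v)) (f' x) v
        rw [this] at hlb
        linarith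
    exact hmono (by norm_num) (by norm_num) zero_le_one
  simpa [hφ_def] using key

lemma cocoercive (f : E → ℝ) (f' : E → E) (hgrad : ∀ w, HasGradientAt f (f' w) w)
    {L' : ℝ} (hL : 0 < L') (hlip : LipschitzWith (Real.toNNReal L') f')
    (wstar : E) (hmin : ∀ w, f wstar ≤ f w) (w : E) :
    ‖f' w‖ ^ 2 ≤ 2 * L' * (f w - f wstar) := by
  have h := descent f f' hgrad hL.le hlip w (-(L'⁻¹ • f' w))
  have h1 : ⟪f' w, -(L'⁻¹ • f' w)⟫ = -(L'⁻¹ * ‖f' w‖ ^ 2) := by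
    rw [inner_neg_right, real_inner_smul_right, real_inner_self_eq_norm_sq]
  have h2 : ‖-(L'⁻¹ • f' w)‖ ^ 2 = L'⁻¹ ^ 2 * ‖f' w‖ ^ 2 := by
    rw [norm_neg, norm_smul]
    simp [abs_of_nonneg (inv_nonneg.mpr hL.le), mul_pow]
  rw [h1, h2] at h
  have h3 := hmin (w + -(L'⁻¹ • f' w))
  have hL' : L' ≠ 0 := hL.ne'
  have : f wstar ≤ f w - L'⁻¹ / 2 * ‖f' w‖ ^ 2 := by
    calc f wstar ≤ f (w + -(L'⁻¹ • f' w)) := h3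
      _ ≤ f w + -(L'⁻¹ * ‖f' w‖ ^ 2) + L' / 2 * (L'⁻¹ ^ 2 * ‖f' w‖ ^ 2) := h
      _ = f w - L'⁻¹ / 2 * ‖f' w‖ ^ 2 := by field_simp; ring
  have h4 : L'⁻¹ / 2 * ‖f' w‖ ^ 2 ≤ f w - f wstar := by linarith
  calc ‖f' w‖ ^ 2 = 2 * L' * (L'⁻¹ / 2 * ‖f' w‖ ^ 2) := by field_simp
    _ ≤ 2 * L' * (f w - f wstar) := by
        apply mul_le_mul_of_nonneg_left h4; positivity

lemma min_of_grad_zero (f : E → ℝ) (f' : E → E) (hgrad : ∀ w, HasGradientAt f (f' w) w)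
    (hconv : ConvexOn ℝ Set.univ f) (w y : E) (hz : f' w = 0) : f w ≤ f y := by
  set g : ℝ → ℝ := fun t => f (w + t • (y - w)) with hg
  have hgeq : g = f ∘ (AffineMap.lineMap w y) := by
    funext t
    simp only [hg, Function.comp_apply, AffineMap.lineMap_apply_module]
    congr 1
    match_scalars <;> ring
  have hgconv : ConvexOn ℝ Set.univ g := by
    rw [hgeq]
    have := hconv.comp_affineMap (AffineMap.lineMap w y)
    simpa using this
  have hder : HasDerivAt g ⟪f' (w + (0:ℝ) • (y - w)), y - w⟫ 0 :=
    line_deriv f f' hgrad w (y - w) 0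
  have hder0 : HasDerivAt g 0 0 := by
    simpa [hz] using hder
  have := hgconv.le_slope_of_hasDerivAt (Set.mem_univ (0:ℝ)) (Set.mem_univ (1:ℝ))
    zero_lt_one hder0
  have hslope : slope g 0 1 = g 1 - g 0 := by simp [slope_def_field]
  rw [hslope] at this
  have h0 : g 0 = f w := by simp [hg]
  have h1 : g 1 = f y := by simp [hg]
  rw [h0, h1] at this
  linarith



/-- For a convex `L`-smooth function, the strong growth condition
implies the weak growth condition with the same constant `ρ`. -/
theorem sgc_implies_wgc
    (d n : ℕ) (hn : 0 < n)
    (f : EuclideanSpace ℝ (Fin d) → ℝ)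
    (f' : EuclideanSpace ℝ (Fin d) → EuclideanSpace ℝ (Fin d))
    (G : EuclideanSpace ℝ (Fin d) → Fin n → EuclideanSpace ℝ (Fin d))
    (ρ L : ℝ) (wstar : EuclideanSpace ℝ (Fin d))
    (hgrad : ∀ w, HasGradientAt f (f' w) w)
    (hconv : ConvexOn ℝ Set.univ f)
    (hlip : LipschitzWith (Real.toNNReal L) f')
    (hmin : ∀ w, f wstar ≤ f w)
    (hunbiased : ∀ w, (1 / (n : ℝ)) • ∑ z, G w z = f' w)
    (hsgc : ∀ w, (1 / (n : ℝ)) * ∑ z, ‖G w z‖ ^ 2 ≤ ρ * ‖f' w‖ ^ 2) :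
    ∀ w, (1 / (n : ℝ)) * ∑ z, ‖G w z‖ ^ 2 ≤ 2 * ρ * L * (f w - f wstar) := by
  intro w
  have hstar : f' wstar = 0 := by
    have hloc : IsLocalMin f wstar := Filter.Eventually.of_forall hmin
    have hfd : HasFDerivAt f (InnerProductSpace.toDual ℝ _ (f' wstar)) wstar :=
      (hasGradientAt_iff_hasFDerivAt).mp (hgrad _)
    have h0 := hloc.hasFDerivAt_eq_zero hfd
    have := congrArg (fun φ => φ (f' wstar)) h0
    simp only [InnerProductSpace.toDual_apply_apply, ContinuousLinearMap.zero_apply] at this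
    exact inner_self_eq_zero.mp this
  by_cases hz : f' w = 0
  · have hfeq : f w = f wstar :=
      le_antisymm (min_of_grad_zero f f' hgrad hconv w wstar hz) (hmin w)
    have := hsgc w
    rw [hz] at this
    simp only [norm_zero, ne_eq] at this
    rw [hfeq]
    simpa using this
  · -- gradient nonzero case
    have hLpos : 0 < L := by
      by_contra hL
      push_neg at hL
      have hzero : Real.toNNReal L = 0 := by simp [Real.toNNReal_of_nonpos hL]
      have := hlip.dist_le_mul w wstar
      rw [hzero] at this
      simp only [NNReal.coe_zero, zero_mul] at this
      exact hz (by rwa [dist_le_zero, hstar] at this)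
    have hlip' : LipschitzWith (Real.toNNReal L) f' := hlip
    have hco := cocoercive f f' hgrad hLpos hlip' wstar hmin w
    have hρ : 0 ≤ ρ := by
      have hpos : 0 < ‖f' w‖ ^ 2 := pow_pos (norm_pos_iff.mpr hz) 2
      have hLHS : 0 ≤ (1 / (n : ℝ)) * ∑ z, ‖G w z‖ ^ 2 :=
        mul_nonneg (by positivity) (Finset.sum_nonneg fun z _ => by positivity)
      have : 0 ≤ ρ * ‖f' w‖ ^ 2 := le_trans hLHS (hsgc w)
      exact (mul_nonneg_iff_of_pos_right hpos).mp this
    calc (1 / (n : ℝ)) * ∑ z, ‖G w z‖ ^ 2 ≤ ρ * ‖f' w‖ ^ 2 := hsgc w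
      _ ≤ ρ * (2 * L * (f w - f wstar)) := mul_le_mul_of_nonneg_left hco hρ
      _ = 2 * ρ * L * (f w - f wstar) := by ring
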